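/- Let n ≥ 1, let q be a prime power, let T_1,...,T_n be positive integers, and let k and H be integers with 0 ≤ k ≤ T_1⋯T_n and H ≥ 0. Then the number of (T_1,...,T_n)-periodic sequences s : ℕⁿ → F_q with k-error linear complexity L_k(s) ≤ H is at most the number of (T_1,...,T_n)-periodic sequences σ with linear complexity L(σ) ≤ H, multiplied by q^k · binom(T_1⋯T_n, k). -/

import Mathlib

open MvPolynomial

/-- The value at `m` of the sequence `P·s`, i.e. `∑_j a_j s(m+j)` where `P = ∑_j a_j X^j`. -/
def recSum {n : ℕ} {F : Type} [Field F] (s : (Fin n → ℕ) → F)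
    (P : MvPolynomial (Fin n) F) (m : Fin n → ℕ) : F :=
  ∑ j ∈ P.support, P.coeff j * s (fun i => m i + j i)

lemma recSum_superset {n : ℕ} {F : Type} [Field F] (s : (Fin n → ℕ) → F)
    (P : MvPolynomial (Fin n) F) (m : Fin n → ℕ) {T : Finset (Fin n →₀ ℕ)}
    (hT : P.support ⊆ T) :
    ∑ j ∈ T, P.coeff j * s (fun i => m i + j i) = recSum s P m := by
  refine (Finset.sum_subset hT ?_).symm
  intro j _ hj
  rw [MvPolynomial.notMem_support_iff.mp hj, zero_mul]

/-- `I(s)`: the ideal of all polynomials `P = ∑_j a_j X^j` such that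
`∑_j a_j s(m + j) = 0` for all `m`, i.e. of all linear recurrences satisfied by `s`. -/
def seqIdeal {n : ℕ} {F : Type} [Field F] (s : (Fin n → ℕ) → F) :
    Ideal (MvPolynomial (Fin n) F) where
  carrier := {P | ∀ m, recSum s P m = 0}
  zero_mem' := by intro m; simp [recSum]
  add_mem' := by
    intro P Q hP hQ m
    have h : recSum s (P + Q) m
        = ∑ j ∈ P.support ∪ Q.support, (P + Q).coeff j * s (fun i => m i + j i) :=
      (recSum_superset s (P + Q) m (MvPolynomial.support_add)).symm
    rw [h]
    simp only [MvPolynomial.coeff_add, add_mul]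
    rw [Finset.sum_add_distrib,
      recSum_superset s P m Finset.subset_union_left,
      recSum_superset s Q m Finset.subset_union_right, hP m, hQ m, add_zero]
  smul_mem' := by
    intro c P hP
    simp only [smul_eq_mul, Set.mem_setOf_eq] at *
    induction c using MvPolynomial.induction_on generalizing P with
    | C a =>
      intro m
      have hsupp : (C a * P).support ⊆ P.support := by
        rw [← MvPolynomial.smul_eq_C_mul]
        exact Finsupp.support_smul
      rw [← recSum_superset s (C a * P) m hsupp]
      have : ∀ j ∈ P.support, (C a * P).coeff j * s (fun i => m i + j i)
          = a * (P.coeff j * s (fun i => m i + j i)) := by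
        intro j _
        rw [MvPolynomial.coeff_C_mul, mul_assoc]
      rw [Finset.sum_congr rfl this, ← Finset.mul_sum]
      rw [recSum_superset s P m (le_refl _)]
      rw [hP m, mul_zero]
    | add p q hp hq =>
      intro m
      rw [add_mul]
      have h1 := hp hP
      have h2 := hq hP
      have h : recSum s (p * P + q * P) m
          = ∑ j ∈ (p * P).support ∪ (q * P).support,
            (p * P + q * P).coeff j * s (fun i => m i + j i) :=
        (recSum_superset s _ m (MvPolynomial.support_add)).symm
      rw [h]
      simp only [MvPolynomial.coeff_add, add_mul]
      rw [Finset.sum_add_distrib,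
        recSum_superset s _ m Finset.subset_union_left,
        recSum_superset s _ m Finset.subset_union_right, h1 m, h2 m, add_zero]
    | mul_X p i hp =>
      intro m
      rw [mul_assoc]
      have hX : ∀ m', recSum s (X i * P) m' = 0 := by
        intro m'
        unfold recSum
        rw [MvPolynomial.support_X_mul, Finset.sum_map]
        have : ∀ j ∈ P.support,
            (X i * P).coeff (addLeftEmbedding (Finsupp.single i 1) j)
              * s (fun t => m' t + (addLeftEmbedding (Finsupp.single i 1) j) t)
            = P.coeff j * s (fun t => (m' t + Finsupp.single i 1 t) + j t) := by
          intro j _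
          rw [addLeftEmbedding_apply, MvPolynomial.coeff_X_mul]
          have harg : (fun t => m' t + ((Finsupp.single i 1 + j : Fin n →₀ ℕ)) t)
              = fun t => (m' t + Finsupp.single i 1 t) + j t := by
            funext t; rw [Finsupp.add_apply]; ring
          rw [harg]
        rw [Finset.sum_congr rfl this]
        have := hP (fun t => m' t + Finsupp.single i 1 t)
        unfold recSum at this
        exact this
      exact hp hX m

/-- The linear complexity `L(s)`: the dimension of `F[X_1,…,X_n]/I(s)` over `F`. -/
noncomputable def linComp {n : ℕ} {F : Type} [Field F] (s : (Fin n → ℕ) → F) : ℕ :=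
  Module.finrank F (MvPolynomial (Fin n) F ⧸ seqIdeal s)

/-- `s` is periodic with period `(T_1,…,T_n)` if `X_i^{T_i} - 1 ∈ I(s)` for all `i`. -/
def IsPeriodic {n : ℕ} {F : Type} [Field F] (T : Fin n → ℕ) (s : (Fin n → ℕ) → F) : Prop :=
  ∀ i, (X i : MvPolynomial (Fin n) F) ^ T i - 1 ∈ seqIdeal s

/-- The `k`-error linear complexity `L_k(s)` of a `(T_1,…,T_n)`-periodic sequence `s`:
the minimum of `L(σ)` over all `(T_1,…,T_n)`-periodic sequences `σ` differing from `s`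
in at most `k` positions of the box `{m : 0 ≤ m_i ≤ T_i - 1}`. -/
noncomputable def errComp {n : ℕ} {F : Type} [Field F] (T : Fin n → ℕ) (k : ℕ)
    (s : (Fin n → ℕ) → F) : ℕ :=
  sInf {K | ∃ σ : (Fin n → ℕ) → F, IsPeriodic T σ ∧
    ({m : Fin n → ℕ | (∀ i, m i < T i) ∧ σ m ≠ s m}).ncard ≤ k ∧ linComp σ = K}

section Aux

open MvPolynomial

variable {n : ℕ} {F : Type} [Field F]

lemma recSum_sub (s : (Fin n → ℕ) → F) (P Q : MvPolynomial (Fin n) F) (m : Fin n → ℕ) :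
    recSum s (P - Q) m = recSum s P m - recSum s Q m := by
  classical
  rw [← recSum_superset s (P - Q) m (MvPolynomial.support_sub _ P Q),
    ← recSum_superset s P m Finset.subset_union_left,
    ← recSum_superset s Q m Finset.subset_union_right, ← Finset.sum_sub_distrib]
  refine Finset.sum_congr rfl fun j _ => ?_
  rw [MvPolynomial.coeff_sub, sub_mul]

lemma recSum_X_pow (s : (Fin n → ℕ) → F) (i : Fin n) (t : ℕ) (m : Fin n → ℕ) :
    recSum s ((X i : MvPolynomial (Fin n) F) ^ t) m
      = s (fun j => m j + Finsupp.single i t j) := by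
  classical
  unfold recSum
  rw [MvPolynomial.X_pow_eq_monomial, MvPolynomial.support_monomial]
  simp [MvPolynomial.coeff_monomial]

lemma recSum_one (s : (Fin n → ℕ) → F) (m : Fin n → ℕ) :
    recSum s (1 : MvPolynomial (Fin n) F) m = s m := by
  classical
  unfold recSum
  have h1 : (1 : MvPolynomial (Fin n) F) = monomial 0 1 := by
    rw [MvPolynomial.monomial_zero', MvPolynomial.C_1]
  rw [h1, MvPolynomial.support_monomial]
  simp

lemma period_step {T : Fin n → ℕ} {s : (Fin n → ℕ) → F} (hs : IsPeriodic T s)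
    (i : Fin n) (m : Fin n → ℕ) :
    s (fun j => m j + Finsupp.single i (T i) j) = s m := by
  have h := hs i m
  rw [show ((X i : MvPolynomial (Fin n) F) ^ T i - 1) = (X i ^ T i) - 1 from rfl] at h
  rw [recSum_sub, recSum_X_pow, recSum_one] at h
  exact sub_eq_zero.mp h

lemma periodic_ext {T : Fin n → ℕ} (hT : ∀ i, 0 < T i) {s s' : (Fin n → ℕ) → F}
    (hs : IsPeriodic T s) (hs' : IsPeriodic T s')
    (h : ∀ m : Fin n → ℕ, (∀ i, m i < T i) → s m = s' m) : s = s' := by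
  have key : ∀ N : ℕ, ∀ m : Fin n → ℕ, ∑ i, m i = N → s m = s' m := by
    intro N
    induction N using Nat.strong_induction_on with
    | _ N ih =>
      intro m hm
      by_cases hbox : ∀ i, m i < T i
      · exact h m hbox
      · push_neg at hbox
        obtain ⟨i, hi⟩ := hbox
        set m' : Fin n → ℕ := fun j => if j = i then m j - T i else m j with hm'
        have hmm : (fun j => m' j + Finsupp.single i (T i) j) = m := by
          funext j
          by_cases hji : j = i
          · subst hji
            simp only [hm', if_pos rfl, Finsupp.single_eq_same]
            exact Nat.sub_add_cancel hi
          · simp only [hm', if_neg hji, Finsupp.single_eq_of_ne' (Ne.symm hji), add_zero]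
        have hstep : s m = s m' := by
          have := period_step hs i m'
          rw [hmm] at this
          exact this
        have hstep' : s' m = s' m' := by
          have := period_step hs' i m'
          rw [hmm] at this
          exact this
        have hsum : ∑ j, m' j < N := by
          rw [← hm]
          apply Finset.sum_lt_sum
          · intro j _
            by_cases hji : j = i
            · subst hji; simp only [hm', if_pos rfl]; exact Nat.sub_le _ _
            · simp [hm', hji]
          · refine ⟨i, Finset.mem_univ i, ?_⟩
            simp only [hm', if_pos rfl]
            exact Nat.sub_lt (lt_of_lt_of_le (hT i) hi) (hT i)
        rw [hstep, hstep', ih _ hsum m' rfl]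
  exact funext fun m => key (∑ i, m i) m rfl

end Aux

theorem statement_17_aux {n : ℕ} (hn : 1 ≤ n) {F : Type} [Field F] [Fintype F]
    (q : ℕ) (hq : Fintype.card F = q)
    (T : Fin n → ℕ) (hT : ∀ i, 0 < T i) (k H : ℕ) (hk : k ≤ ∏ i, T i) :
    {s : (Fin n → ℕ) → F | IsPeriodic T s ∧ errComp T k s ≤ H}.ncard
      ≤ {σ : (Fin n → ℕ) → F | IsPeriodic T σ ∧ linComp σ ≤ H}.ncard
        * (q ^ k * (∏ i, T i).choose k) := by
  classical
  set S := {s : (Fin n → ℕ) → F | IsPeriodic T s ∧ errComp T k s ≤ H} with hS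
  set B := {σ : (Fin n → ℕ) → F | IsPeriodic T σ ∧ linComp σ ≤ H} with hB
  set boxF : Finset (Fin n → ℕ) := Fintype.piFinset (fun i => Finset.range (T i)) with hboxF
  have hmemBox : ∀ m : Fin n → ℕ, m ∈ boxF ↔ ∀ i, m i < T i := by
    intro m
    simp [hboxF, Fintype.mem_piFinset]
  have hboxcard : boxF.card = ∏ i, T i := by
    simp [hboxF, Fintype.card_piFinset]
  -- finiteness of the set of periodic sequences
  have hPfin : {s : (Fin n → ℕ) → F | IsPeriodic T s}.Finite := by
    set r : ((Fin n → ℕ) → F) → ({y : Fin n → ℕ // y ∈ boxF} → F) :=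
      fun s x => s x.1 with hr
    apply Set.Finite.of_finite_image (f := r) (Set.toFinite _)
    intro s hsmem s' hsmem' hrs
    refine periodic_ext hT hsmem hsmem' ?_
    intro m hm
    have : r s ⟨m, (hmemBox m).mpr hm⟩ = r s' ⟨m, (hmemBox m).mpr hm⟩ := by rw [hrs]
    exact this
  have hBfin : B.Finite := hPfin.subset (fun σ hσ => hσ.1)
  have hSfin : S.Finite := hPfin.subset (fun σ hσ => hσ.1)
  -- witness extraction
  have key : ∀ s : (Fin n → ℕ) → F, IsPeriodic T s → errComp T k s ≤ H →
      ∃ σ, IsPeriodic T σ ∧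
        ({m : Fin n → ℕ | (∀ i, m i < T i) ∧ σ m ≠ s m}).ncard ≤ k ∧ linComp σ ≤ H := by
    intro s hp hle
    have hne : {K | ∃ σ : (Fin n → ℕ) → F, IsPeriodic T σ ∧
        ({m : Fin n → ℕ | (∀ i, m i < T i) ∧ σ m ≠ s m}).ncard ≤ k ∧
        linComp σ = K}.Nonempty := by
      refine ⟨linComp s, s, hp, ?_, rfl⟩
      have : {m : Fin n → ℕ | (∀ i, m i < T i) ∧ s m ≠ s m} = ∅ := by
        ext m; simp
      rw [this]
      simp
    have hmem := Nat.sInf_mem hne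
    obtain ⟨σ, h1, h2, h3⟩ := hmem
    exact ⟨σ, h1, h2, le_trans (le_of_eq h3) hle⟩
  have h1 : ∀ x : ↥S, ∃ σ, IsPeriodic T σ ∧
      ({m : Fin n → ℕ | (∀ i, m i < T i) ∧ σ m ≠ (x : (Fin n → ℕ) → F) m}).ncard ≤ k ∧
      linComp σ ≤ H := fun x => key x x.2.1 x.2.2
  choose σf hσ1 hσ2 hσ3 using h1
  -- for each x, the difference set and a superset of cardinality k
  have h2 : ∀ x : ↥S, ∃ A : Finset (Fin n → ℕ),
      (∀ m : Fin n → ℕ, ((∀ i, m i < T i) ∧ σf x m ≠ (x : (Fin n → ℕ) → F) m) → m ∈ A) ∧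
      A ∈ boxF.powersetCard k := by
    intro x
    set D := {m : Fin n → ℕ | (∀ i, m i < T i) ∧ σf x m ≠ (x : (Fin n → ℕ) → F) m} with hD
    have hDfin : D.Finite := by
      apply Set.Finite.subset boxF.finite_toSet
      intro m hm
      exact (hmemBox m).mpr hm.1
    have hsub : hDfin.toFinset ⊆ boxF := by
      intro m hm
      rw [Set.Finite.mem_toFinset] at hm
      exact (hmemBox m).mpr hm.1
    have hcard : hDfin.toFinset.card ≤ k := by
      rw [← Set.ncard_eq_toFinset_card D hDfin]
      exact hσ2 x
    obtain ⟨A, hA1, hA2, hA3⟩ := Finset.exists_subsuperset_card_eq hsub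
      (le_trans hcard (le_refl k)) (by rw [hboxcard]; exact hk)
    refine ⟨A, ?_, Finset.mem_powersetCard.mpr ⟨hA2, hA3⟩⟩
    intro m hm
    exact hA1 (hDfin.mem_toFinset.mpr hm)
  choose Af hA1 hA2 using h2
  -- the injection
  set Tgt := ↥B × Σ A : ↥(boxF.powersetCard k), ({y : Fin n → ℕ // y ∈ (A : Finset (Fin n → ℕ))} → F) with hTgt
  have : Finite ↥B := hBfin.to_subtype
  set f : ↥S → Tgt := fun x =>
    (⟨σf x, hσ1 x, hσ3 x⟩,
     ⟨⟨Af x, hA2 x⟩, fun y => (x : (Fin n → ℕ) → F) y - σf x y⟩) with hf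
  -- observables
  set obs : Tgt → ((Fin n → ℕ) → F) := fun p m =>
    if h : m ∈ ((p.2.1 : Finset (Fin n → ℕ))) then p.2.2 ⟨m, h⟩ else 0 with hobs
  have hinj : Function.Injective f := by
    intro x y hxy
    have hσeq : σf x = σf y := congrArg (fun p : Tgt => (p.1 : (Fin n → ℕ) → F)) hxy
    have hAeq : Af x = Af y := congrArg (fun p : Tgt => ((p.2.1 : Finset (Fin n → ℕ)))) hxy
    have hdeq : obs (f x) = obs (f y) := congrArg obs hxy
    have hval : ∀ m : Fin n → ℕ, (∀ i, m i < T i) →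
        (x : (Fin n → ℕ) → F) m = (y : (Fin n → ℕ) → F) m := by
      intro m hm
      by_cases hmA : m ∈ Af x
      · have h1 : obs (f x) m = (x : (Fin n → ℕ) → F) m - σf x m := by
          simp only [hobs, hf, dif_pos hmA]
        have h2 : obs (f y) m = (y : (Fin n → ℕ) → F) m - σf y m := by
          have hmA' : m ∈ Af y := hAeq ▸ hmA
          simp only [hobs, hf, dif_pos hmA']
        have := h1 ▸ h2 ▸ congrFun hdeq m
        have h3 : (x : (Fin n → ℕ) → F) m - σf x m = (y : (Fin n → ℕ) → F) m - σf y m := by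
          rw [← h1, ← h2, hdeq]
        rw [hσeq] at h3
        exact sub_left_injective h3
      · have hx' : σf x m = (x : (Fin n → ℕ) → F) m := by
          by_contra hne
          exact hmA (hA1 x m ⟨hm, hne⟩)
        have hy' : σf y m = (y : (Fin n → ℕ) → F) m := by
          by_contra hne
          exact (hAeq ▸ hmA) (hA1 y m ⟨hm, hne⟩)
        rw [← hx', ← hy', hσeq]
    exact Subtype.ext (periodic_ext hT x.2.1 y.2.1 hval)
  -- cardinality chain
  have hcardTgt : Nat.card Tgt = B.ncard * ((∏ i, T i).choose k * q ^ k) := by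
    rw [hTgt, Nat.card_prod, Nat.card_coe_set_eq]
    congr 1
    rw [Nat.card_eq_fintype_card, Fintype.card_sigma]
    have : ∀ A : ↥(boxF.powersetCard k),
        Fintype.card ({y : Fin n → ℕ // y ∈ (A : Finset (Fin n → ℕ))} → F) = q ^ k := by
      intro A
      rw [Fintype.card_fun, Fintype.card_coe, hq,
        (Finset.mem_powersetCard.mp A.2).2]
    rw [Finset.sum_congr rfl (fun A _ => this A)]
    rw [Finset.sum_const, Finset.card_univ, smul_eq_mul]
    congr 1
    rw [Fintype.card_coe, Finset.card_powersetCard, hboxcard]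
  calc S.ncard = Nat.card ↥S := (Nat.card_coe_set_eq S).symm
    _ ≤ Nat.card Tgt := Nat.card_le_card_of_injective f hinj
    _ = B.ncard * ((∏ i, T i).choose k * q ^ k) := hcardTgt
    _ = B.ncard * (q ^ k * (∏ i, T i).choose k) := by ring

/-- The number of `(T_1,…,T_n)`-periodic sequences with `k`-error linear complexity at most
`H` is at most the number of `(T_1,…,T_n)`-periodic sequences with linear complexity at most
`H`, multiplied by `q^k · C(T_1 ⋯ T_n, k)`. -/
theorem statement_17 {n : ℕ} (hn : 1 ≤ n) {F : Type} [Field F] [Fintype F]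
    (q : ℕ) (hq : Fintype.card F = q)
    (T : Fin n → ℕ) (hT : ∀ i, 0 < T i) (k H : ℕ) (hk : k ≤ ∏ i, T i) :
    {s : (Fin n → ℕ) → F | IsPeriodic T s ∧ errComp T k s ≤ H}.ncard
      ≤ {σ : (Fin n → ℕ) → F | IsPeriodic T σ ∧ linComp σ ≤ H}.ncard
        * (q ^ k * (∏ i, T i).choose k) := by
  exact statement_17_aux hn q hq T hT k H hk
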